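/- Let f, g, c_p > 0 and Π₀ ∈ ℝ, and let c(x, y) = (f²/(2y₂))(x₁ − y₁)² + g x₂/y₂ − c_p Π₀ for x ∈ ℝ² and y ∈ ℝ² with y₂ > 0, and let Φ(x; y) = ((y₂/f²) x₁ + y₁, (y₂²/g)(x₂ − x₁²/(2f²))). Then for every y, z ∈ ℝ² with y₂ > 0, z₂ > 0, and every x ∈ ℝ², c(Φ(x; y), z) = (f²/(2z₂))(y₁ − z₁)² + (y₂²/z₂) x₂ + (y₂ x₁ / z₂)(y₁ − z₁) − c_p Π₀; in particular, as a function of x it is affine. -/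
import Mathlib


/-- For the 2D compressible semi-geostrophic cost `c` and the `c`-exponential map
`Φ(·;y)`, one has the explicit formula
`c(Φ(x;y), z) = (f²/(2z₂))(y₁ − z₁)² + (y₂²/z₂) x₂ + (y₂ x₁ / z₂)(y₁ − z₁) − c_p Π₀`,
which is affine in `x`. -/
theorem stmt_7
    (f g c_p Pr₀ : ℝ) (hf : 0 < f) (hg : 0 < g) (hcp : 0 < c_p)
    (c : (ℝ × ℝ) → (ℝ × ℝ) → ℝ)
    (hc : ∀ x y : ℝ × ℝ,
      c x y = f ^ 2 / (2 * y.2) * (x.1 - y.1) ^ 2 + g * x.2 / y.2 - c_p * Pr₀)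
    (Φ : (ℝ × ℝ) → (ℝ × ℝ) → ℝ × ℝ)
    (hΦ : ∀ x y : ℝ × ℝ,
      Φ x y = (y.2 / f ^ 2 * x.1 + y.1, y.2 ^ 2 / g * (x.2 - x.1 ^ 2 / (2 * f ^ 2)))) :
    ∀ y z : ℝ × ℝ, 0 < y.2 → 0 < z.2 →
      (∀ x : ℝ × ℝ,
        c (Φ x y) z
          = f ^ 2 / (2 * z.2) * (y.1 - z.1) ^ 2 + y.2 ^ 2 / z.2 * x.2
            + y.2 * x.1 / z.2 * (y.1 - z.1) - c_p * Pr₀)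
      ∧ (∃ (a : ℝ × ℝ) (b : ℝ), ∀ x : ℝ × ℝ,
          c (Φ x y) z = a.1 * x.1 + a.2 * x.2 + b) := by
  intro y z hy hz
  have hf2 : (f : ℝ) ^ 2 ≠ 0 := pow_ne_zero 2 hf.ne'
  have hg' : (g : ℝ) ≠ 0 := hg.ne'
  have hz2 : z.2 ≠ 0 := hz.ne'
  have key : ∀ x : ℝ × ℝ,
      c (Φ x y) z
        = f ^ 2 / (2 * z.2) * (y.1 - z.1) ^ 2 + y.2 ^ 2 / z.2 * x.2
          + y.2 * x.1 / z.2 * (y.1 - z.1) - c_p * Pr₀ := by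
    intro x
    rw [hΦ, hc]
    field_simp
    ring
  refine ⟨key, ⟨(y.2 / z.2 * (y.1 - z.1), y.2 ^ 2 / z.2),
    f ^ 2 / (2 * z.2) * (y.1 - z.1) ^ 2 - c_p * Pr₀, ?_⟩⟩
  intro x
  rw [key x]
  ring
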